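/- Let M : ℝⁿ → ℝ^{n×n} be a measurable matrix-valued function with ‖M(x)‖ ≤ c uniformly, let (x_t) be any sequence in ℝⁿ, and let (e_t) be i.i.d. random vectors with i.i.d. components uniform on [-ε/2, ε/2]. Then (1/T)·Σ_{t=0}^{T-1} e_tᵀ M(x_t) e_t converges almost surely to lim_{T→∞} (ε²/12)·(1/T)·Σ_{t=0}^{T-1} tr(M(x_t)), provided the latter Cesàro limit exists. -/

import Mathlib

attribute [local instance] Matrix.frobeniusNormedAddCommGroup

open MeasureTheory Filter

open ProbabilityTheory

set_option linter.unusedSectionVars false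
set_option linter.unusedVariables false


lemma unif_vol {a : ℝ} (ha : 0 < a) :
    (volume (Set.Icc (-a) a)) ≠ 0 ∧ (volume (Set.Icc (-a) a)) ≠ ⊤ := by
  rw [Real.volume_Icc]
  constructor
  · simp only [ne_eq, ENNReal.ofReal_eq_zero, not_le]; linarith
  · exact ENNReal.ofReal_ne_top


section Unif
variable {Ω : Type*} [MeasureSpace Ω] [IsProbabilityMeasure (volume : Measure Ω)]

lemma unif_mem {X : Ω → ℝ} {a : ℝ} (ha : 0 < a)
    (h : pdf.IsUniform X (Set.Icc (-a) a) (volume : Measure Ω)) :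
    ∀ᵐ ω, X ω ∈ Set.Icc (-a) a := by
  obtain ⟨h0, ht⟩ := unif_vol ha
  have := pdf.IsUniform.measure_preimage h0 ht h (A := (Set.Icc (-a) a)ᶜ)
    measurableSet_Icc.compl
  rw [Set.inter_compl_self] at this
  simp only [measure_empty, ENNReal.zero_div] at this
  rw [ae_iff]
  convert this using 2
  rfl

lemma unif_integral {X : Ω → ℝ} {a : ℝ} (ha : 0 < a) (hX : Measurable X)
    (h : pdf.IsUniform X (Set.Icc (-a) a) (volume : Measure Ω))
    (g : ℝ → ℝ) (hg : Measurable g) :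
    ∫ ω, g (X ω) = (2 * a)⁻¹ * ∫ x in Set.Icc (-a) a, g x := by
  have h1 : ∫ ω, g (X ω) = ∫ x, g x ∂(Measure.map X (volume : Measure Ω)) :=
    (integral_map hX.aemeasurable hg.aestronglyMeasurable).symm
  rw [h1, h]
  unfold ProbabilityTheory.cond
  rw [integral_smul_measure]
  rw [Real.volume_Icc]
  have : a - -a = 2 * a := by ring
  rw [this, ENNReal.toReal_inv, ENNReal.toReal_ofReal (by linarith)]
  rfl

lemma unif_mean {X : Ω → ℝ} {a : ℝ} (ha : 0 < a) (hX : Measurable X)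
    (h : pdf.IsUniform X (Set.Icc (-a) a) (volume : Measure Ω)) :
    ∫ ω, X ω = 0 := by
  have := unif_integral ha hX h id measurable_id
  simp only [id] at this
  rw [this, integral_Icc_eq_integral_Ioc, ← intervalIntegral.integral_of_le (by linarith)]
  simp [integral_id]

lemma unif_sq {X : Ω → ℝ} {a : ℝ} (ha : 0 < a) (hX : Measurable X)
    (h : pdf.IsUniform X (Set.Icc (-a) a) (volume : Measure Ω)) :
    ∫ ω, X ω * X ω = a ^ 2 / 3 := by
  have := unif_integral ha hX h (fun x => x * x) (measurable_id.mul measurable_id)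
  rw [this, integral_Icc_eq_integral_Ioc, ← intervalIntegral.integral_of_le (by linarith)]
  have : ∀ x : ℝ, x * x = x ^ 2 := fun x => (sq x).symm
  simp_rw [this]
  rw [integral_pow]
  have h2a : (2 : ℝ) * a ≠ 0 := by positivity
  field_simp
  ring

end Unif

lemma slln_bounded {Ω : Type*} [MeasureSpace Ω] [IsProbabilityMeasure (volume : Measure Ω)]
    (Z : ℕ → Ω → ℝ) (K : ℝ) (hK : 0 < K)
    (hmeas : ∀ t, Measurable (Z t))
    (hbdd : ∀ t, ∀ᵐ ω, |Z t ω| ≤ K)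
    (hmean : ∀ t, ∫ ω, Z t ω = 0)
    (hind : ∀ s t, s ≠ t → IndepFun (Z s) (Z t) (volume : Measure Ω)) :
    ∀ᵐ ω, Tendsto (fun T : ℕ => (1/(T:ℝ)) * ∑ t ∈ Finset.range T, Z t ω) atTop (nhds 0) := by
  set S : ℕ → Ω → ℝ := fun T ω => ∑ t ∈ Finset.range T, Z t ω with hSdef
  have hmem : ∀ t, MemLp (Z t) 2 (volume : Measure Ω) := by
    intro t
    refine memLp_of_bounded (a := -K) (b := K) ((hbdd t).mono fun ω h => ?_)
      (hmeas t).aestronglyMeasurable 2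
    exact Set.mem_Icc.2 (abs_le.1 h)
  have hSmeas : ∀ T, Measurable (S T) := fun T => Finset.measurable_sum _ fun t _ => hmeas t
  have hSmem : ∀ T, MemLp (S T) 2 (volume : Measure Ω) := by
    intro T
    have : S T = ∑ t ∈ Finset.range T, Z t := by ext ω; simp [hSdef]
    rw [this]
    exact memLp_finset_sum' _ fun t _ => hmem t
  have hSint : ∀ T, ∫ ω, S T ω = 0 := by
    intro T
    rw [hSdef]
    rw [integral_finset_sum _ fun t _ => (hmem t).integrable (by norm_num)]
    simp [hmean]
  have hvar : ∀ T, variance (S T) (volume : Measure Ω) ≤ T * K ^ 2 := by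
    intro T
    have h1 : S T = ∑ t ∈ Finset.range T, Z t := by ext ω; simp [hSdef]
    rw [h1, IndepFun.variance_sum (fun t _ => hmem t)
      (fun s hs t ht hst => hind s t hst)]
    calc ∑ t ∈ Finset.range T, variance (Z t) (volume : Measure Ω)
        ≤ ∑ t ∈ Finset.range T, K ^ 2 := by
          refine Finset.sum_le_sum fun t _ => ?_
          have := variance_le_sq_of_bounded (a := -K) (b := K)
            ((hbdd t).mono fun ω h => Set.mem_Icc.2 (abs_le.1 h))
            (hmeas t).aemeasurable
          calc variance (Z t) (volume : Measure Ω) ≤ ((K - -K)/2)^2 := this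
            _ = K ^ 2 := by ring
      _ = T * K ^ 2 := by simp [mul_comm]
  have hsq_int : ∀ T, ∫ ω, (S T ω) ^ 2 ≤ T * K ^ 2 := by
    intro T
    have := variance_eq_sub (hSmem T)
    have h2 : (volume : Measure Ω)[(S T) ^ 2] = ∫ ω, (S T ω) ^ 2 := by
      simp [Pi.pow_apply]
    rw [h2] at this
    have h3 := hvar T
    rw [this] at h3
    rw [hSint T] at h3
    simpa using h3
  -- the subsequence along squares
  set g : ℕ → Ω → ℝ := fun k ω => (S ((k+1)^2) ω / ((k:ℝ)+1)^2) ^ 2 with hgdef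
  have hg_nonneg : ∀ k ω, 0 ≤ g k ω := fun k ω => sq_nonneg _
  have hg_meas : ∀ k, Measurable (g k) := by
    intro k
    exact ((hSmeas _).div_const _).pow_const 2
  have hg_int : ∀ k, Integrable (g k) (volume : Measure Ω) := by
    intro k
    have h1 : Integrable (fun ω => (S ((k+1)^2) ω)^2) (volume : Measure Ω) := by
      have := (hSmem ((k+1)^2)).integrable_sq
      simpa using this
    have : g k = fun ω => (1/((k:ℝ)+1)^2)^2 * (S ((k+1)^2) ω)^2 := by
      ext ω; simp only [hgdef]; field_simp
    rw [this]
    exact h1.const_mul _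
  have hg_int_le : ∀ k, ∫ ω, g k ω ≤ K^2 / ((k:ℝ)+1)^2 := by
    intro k
    have h1 : g k = fun ω => (1/((k:ℝ)+1)^2)^2 * (S ((k+1)^2) ω)^2 := by
      ext ω; simp only [hgdef]; field_simp
    rw [h1, integral_const_mul]
    have h2 := hsq_int ((k+1)^2)
    have hpos : (0:ℝ) < ((k:ℝ)+1)^2 := by positivity
    have h3 : (1/((k:ℝ)+1)^2)^2 * ∫ ω, (S ((k+1)^2) ω)^2
        ≤ (1/((k:ℝ)+1)^2)^2 * ((((k+1)^2 : ℕ) : ℝ) * K ^ 2) := by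
      refine mul_le_mul_of_nonneg_left h2 (by positivity)
    refine h3.trans (le_of_eq ?_)
    push_cast
    field_simp
  have hsummable : ∀ᵐ ω, Summable fun k => g k ω := by
    have hb : Summable (fun k : ℕ => K^2 / ((k:ℝ)+1)^2) := by
      have := Real.summable_one_div_nat_pow (p := 2)
      have h2 : Summable (fun k : ℕ => 1 / ((k:ℝ)+1)^2) := by
        have := (summable_nat_add_iff (f := fun k : ℕ => 1 / (k:ℝ)^2) 1).2 (this.2 (by norm_num))
        simpa using this
      simpa [div_eq_mul_inv, mul_comm] using h2.mul_left (K^2)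
    have key : ∫⁻ ω, ∑' k, ENNReal.ofReal (g k ω) < ⊤ := by
      rw [lintegral_tsum (fun k => ((hg_meas k).ennreal_ofReal).aemeasurable)]
      have h1 : ∀ k, ∫⁻ ω, ENNReal.ofReal (g k ω) = ENNReal.ofReal (∫ ω, g k ω) :=
        fun k => (ofReal_integral_eq_lintegral_ofReal (hg_int k)
          (Eventually.of_forall fun ω => hg_nonneg k ω)).symm
      simp_rw [h1]
      calc ∑' k, ENNReal.ofReal (∫ ω, g k ω)
          ≤ ∑' k : ℕ, ENNReal.ofReal (K^2 / ((k:ℝ)+1)^2) :=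
            ENNReal.tsum_le_tsum fun k => ENNReal.ofReal_le_ofReal (hg_int_le k)
        _ = ENNReal.ofReal (∑' k : ℕ, K^2/((k:ℝ)+1)^2) :=
            (ENNReal.ofReal_tsum_of_nonneg (fun k => by positivity) hb).symm
        _ < ⊤ := ENNReal.ofReal_lt_top
    have hae := ae_lt_top (f := fun ω => ∑' k, ENNReal.ofReal (g k ω))
      (Measurable.ennreal_tsum fun k => (hg_meas k).ennreal_ofReal) key.ne
    filter_upwards [hae] with ω hω
    have h2 : Summable fun k => (ENNReal.ofReal (g k ω)).toReal :=
      ENNReal.summable_toReal hω.ne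
    refine h2.congr fun k => ?_
    rw [ENNReal.toReal_ofReal (hg_nonneg k ω)]
  have hbdd_all : ∀ᵐ ω, ∀ t, |Z t ω| ≤ K := ae_all_iff.2 hbdd
  filter_upwards [hsummable, hbdd_all] with ω hsum hb
  -- subsequence tendsto
  have hg0 : Tendsto (fun k => g k ω) atTop (nhds 0) := hsum.tendsto_atTop_zero
  have hu : Tendsto (fun k => S ((k+1)^2) ω / ((k:ℝ)+1)^2) atTop (nhds 0) := by
    have h1 : Tendsto (fun k => Real.sqrt (g k ω)) atTop (nhds 0) := by
      have := (Real.continuous_sqrt.tendsto 0).comp hg0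
      simpa [Function.comp_def] using this
    refine squeeze_zero_norm' (Eventually.of_forall fun k => ?_) h1
    show ‖S ((k+1)^2) ω / ((k:ℝ)+1)^2‖ ≤ Real.sqrt (g k ω)
    simp only [hgdef]
    rw [Real.sqrt_sq_eq_abs, Real.norm_eq_abs]
  have hv : Tendsto (fun k : ℕ => S (k^2) ω / ((k:ℝ))^2) atTop (nhds 0) := by
    rw [← tendsto_add_atTop_iff_nat 1]
    refine hu.congr fun k => ?_
    push_cast
    ring_nf
  have hsqrt : Tendsto (fun T : ℕ => Nat.sqrt T) atTop atTop := by
    refine tendsto_atTop_atTop.2 fun b => ⟨b*b, fun T hT => ?_⟩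
    exact Nat.le_sqrt.2 hT
  have hvs : Tendsto (fun T : ℕ => |S ((Nat.sqrt T)^2) ω| / ((Nat.sqrt T : ℝ))^2)
      atTop (nhds 0) := by
    have habs : Tendsto (fun k : ℕ => |S (k^2) ω / ((k:ℝ))^2|) atTop (nhds 0) := by
      have := hv.abs
      simpa using this
    have hcomp := habs.comp hsqrt
    refine hcomp.congr fun T => ?_
    simp [abs_div, abs_of_nonneg (sq_nonneg ((Nat.sqrt T : ℝ)))]
  have hinv : Tendsto (fun T : ℕ => 2*K / ((Nat.sqrt T : ℝ))) atTop (nhds 0) :=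
    (tendsto_const_div_atTop_nhds_zero_nat (2*K)).comp hsqrt
  have hbT : Tendsto (fun T : ℕ => |S ((Nat.sqrt T)^2) ω| / ((Nat.sqrt T : ℝ))^2
      + 2*K / ((Nat.sqrt T : ℝ))) atTop (nhds 0) := by
    simpa using hvs.add hinv
  refine squeeze_zero_norm' ?_ hbT
  filter_upwards [eventually_ge_atTop 1] with T hT
  set k := Nat.sqrt T with hk
  have hk1 : 1 ≤ k := by
    rw [hk]
    exact Nat.sqrt_pos.2 hT
  have hk2 : k^2 ≤ T := Nat.sqrt_le' T
  have hk3 : T < (k+1)^2 := by simpa [Nat.succ_eq_add_one] using Nat.lt_succ_sqrt' T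
  have hkR : (1:ℝ) ≤ (k:ℝ) := by exact_mod_cast hk1
  have hkRpos : (0:ℝ) < (k:ℝ) := by linarith
  -- decompose S T
  have hdecomp : S T ω = S (k^2) ω + ∑ t ∈ Finset.Ico (k^2) T, Z t ω :=
    (Finset.sum_range_add_sum_Ico _ hk2).symm
  have htail : |∑ t ∈ Finset.Ico (k^2) T, Z t ω| ≤ 2*(k:ℝ)*K := by
    calc |∑ t ∈ Finset.Ico (k^2) T, Z t ω| ≤ ∑ t ∈ Finset.Ico (k^2) T, |Z t ω| :=
        Finset.abs_sum_le_sum_abs _ _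
      _ ≤ ∑ t ∈ Finset.Ico (k^2) T, K := Finset.sum_le_sum fun t _ => hb t
      _ = ((T - k^2 : ℕ) : ℝ) * K := by rw [Finset.sum_const, Nat.card_Ico]; simp
      _ ≤ 2*(k:ℝ)*K := by
          have e1 : (k+1)^2 = k*k + 2*k + 1 := by ring
          have e2 : k^2 = k*k := sq k
          have h4 : T - k^2 ≤ 2*k := by omega
          have : ((T - k^2 : ℕ) : ℝ) ≤ 2*(k:ℝ) := by exact_mod_cast h4
          nlinarith [le_of_lt hK]
  have hST : |S T ω| ≤ |S (k^2) ω| + 2*(k:ℝ)*K := by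
    rw [hdecomp]
    calc |S (k^2) ω + ∑ t ∈ Finset.Ico (k^2) T, Z t ω|
        ≤ |S (k^2) ω| + |∑ t ∈ Finset.Ico (k^2) T, Z t ω| := abs_add_le _ _
      _ ≤ |S (k^2) ω| + 2*(k:ℝ)*K := by linarith
  have hTR : ((k:ℝ))^2 ≤ (T:ℝ) := by exact_mod_cast hk2
  have hTpos : (0:ℝ) < (T:ℝ) := by
    have : (1:ℕ) ≤ T := hT
    exact_mod_cast Nat.lt_of_lt_of_le Nat.zero_lt_one this
  show ‖1/(T:ℝ) * S T ω‖ ≤ _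
  have hnorm : ‖1/(T:ℝ) * S T ω‖ = |S T ω| / (T:ℝ) := by
    rw [Real.norm_eq_abs, abs_mul, abs_of_nonneg (by positivity : (0:ℝ) ≤ 1/(T:ℝ))]
    ring
  rw [hnorm]
  have hstep : |S T ω| / (T:ℝ) ≤ (|S (k^2) ω| + 2*(k:ℝ)*K) / ((k:ℝ))^2 :=
    div_le_div₀ (by positivity) hST (by positivity) hTR
  refine hstep.trans (le_of_eq ?_)
  field_simp


lemma entry_abs_le {n : ℕ} (A : Matrix (Fin n) (Fin n) ℝ) (i j : Fin n) :
    |A i j| ≤ ‖A‖ := by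
  rw [Matrix.frobenius_norm_def]
  have h1 : |A i j| = (‖A i j‖ ^ (2:ℝ)) ^ (1/2:ℝ) := by
    rw [← Real.rpow_mul (norm_nonneg _)]
    norm_num [Real.norm_eq_abs]
  rw [h1]
  apply Real.rpow_le_rpow (by positivity) ?_ (by norm_num)
  calc ‖A i j‖ ^ (2:ℝ) ≤ ∑ j', ‖A i j'‖ ^ (2:ℝ) :=
        Finset.single_le_sum (f := fun j' => ‖A i j'‖ ^ (2:ℝ))
          (fun _ _ => by positivity) (Finset.mem_univ j)
    _ ≤ ∑ i', ∑ j', ‖A i' j'‖ ^ (2:ℝ) :=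
        Finset.single_le_sum (f := fun i' => ∑ j', ‖A i' j'‖ ^ (2:ℝ))
          (fun _ _ => Finset.sum_nonneg fun _ _ => by positivity) (Finset.mem_univ i)



theorem lln_quadratic_forms_dither
    {Ω : Type*} [MeasureSpace Ω] [IsProbabilityMeasure (volume : Measure Ω)]
    (n : ℕ) (ε c : ℝ) (hε : 0 < ε) (hc : 0 < c)
    (M : EuclideanSpace ℝ (Fin n) → Matrix (Fin n) (Fin n) ℝ)
    (hMmeas : ∀ i j, Measurable fun x => M x i j)
    (hMbdd : ∀ x, ‖M x‖ ≤ c)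
    (x : ℕ → EuclideanSpace ℝ (Fin n))
    (e : ℕ → Ω → (Fin n → ℝ))
    (hemeas : ∀ t, Measurable (e t))
    (hindep : ProbabilityTheory.iIndepFun
      e (volume : Measure Ω))
    (hident : ∀ t, Measure.map (e t) (volume : Measure Ω) = Measure.map (e 0) (volume : Measure Ω))
    (hcomp_indep : ∀ t, ProbabilityTheory.iIndepFun
      (fun i ω => e t ω i) (volume : Measure Ω))
    (hcomp_unif : ∀ t i, pdf.IsUniform (fun ω : Ω => e t ω i)
      (Set.Icc (-(ε / 2)) (ε / 2)) (volume : Measure Ω))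
    (L : ℝ)
    (hL : Tendsto (fun T : ℕ => (1 / (T : ℝ)) * ∑ t ∈ Finset.range T, (M (x t)).trace)
      atTop (nhds L)) :
    ∀ᵐ ω ∂(volume : Measure Ω),
      Tendsto (fun T : ℕ => (1 / (T : ℝ)) * ∑ t ∈ Finset.range T,
          ∑ i, ∑ j, e t ω i * M (x t) i j * e t ω j)
        atTop (nhds (ε ^ 2 / 12 * L)) := by
  classical
  have ha : (0:ℝ) < ε/2 := by linarith
  have hem : ∀ t i, Measurable fun ω => e t ω i :=
    fun t i => (measurable_pi_apply i).comp (hemeas t)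
  have hMentry : ∀ y i j, |M y i j| ≤ c :=
    fun y i j => (entry_abs_le (M y) i j).trans (hMbdd y)
  have htr : ∀ y, |(M y).trace| ≤ n * c := by
    intro y
    calc |(M y).trace| = |∑ i, M y i i| := rfl
      _ ≤ ∑ i, |M y i i| := Finset.abs_sum_le_sum_abs _ _
      _ ≤ ∑ _i : Fin n, c := Finset.sum_le_sum fun i _ => hMentry y i i
      _ = n * c := by simp [mul_comm]
  have hecomp_bdd : ∀ t i, ∀ᵐ ω, |e t ω i| ≤ ε/2 := by
    intro t i
    filter_upwards [unif_mem ha (hcomp_unif t i)] with ω hω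
    rw [abs_le]
    exact ⟨hω.1, hω.2⟩
  have hmean0 : ∀ t i, ∫ ω, e t ω i = 0 :=
    fun t i => unif_mean ha (hem t i) (hcomp_unif t i)
  have hsq : ∀ t i, ∫ ω, e t ω i * e t ω i = ε^2/12 := by
    intro t i
    have h := unif_sq ha (hem t i) (hcomp_unif t i)
    rw [h]
    ring
  have hint_one : ∀ t i, Integrable (fun ω => e t ω i) (volume : Measure Ω) := by
    intro t i
    refine ⟨(hem t i).aestronglyMeasurable, ?_⟩
    refine HasFiniteIntegral.of_bounded (C := ε/2) ?_
    filter_upwards [hecomp_bdd t i] with ω hω using by rwa [Real.norm_eq_abs]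
  have hint_prod : ∀ t i j, Integrable (fun ω => e t ω i * e t ω j) (volume : Measure Ω) := by
    intro t i j
    refine ⟨((hem t i).mul (hem t j)).aestronglyMeasurable, ?_⟩
    refine HasFiniteIntegral.of_bounded (C := (ε/2)*(ε/2)) ?_
    filter_upwards [hecomp_bdd t i, hecomp_bdd t j] with ω h1 h2
    rw [Real.norm_eq_abs, abs_mul]
    exact mul_le_mul h1 h2 (abs_nonneg _) (le_of_lt ha)
  have hprod : ∀ t i j, ∫ ω, e t ω i * e t ω j = if i = j then ε^2/12 else 0 := by
    intro t i j
    by_cases h : i = j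
    · subst h; simp [hsq t i]
    · have hid : IndepFun (fun ω => e t ω i) (fun ω => e t ω j) (volume : Measure Ω) :=
        (hcomp_indep t).indepFun h
      have h3 := hid.integral_mul_eq_mul_integral (hint_one t i).1 (hint_one t j).1
      simp only [Pi.mul_apply, hmean0, mul_zero] at h3
      rw [if_neg h]
      exact h3
  -- the quadratic form and its centered version
  set Y : ℕ → Ω → ℝ := fun t ω => ∑ i, ∑ j, e t ω i * M (x t) i j * e t ω j with hYdef
  have hterm_int : ∀ t (i j : Fin n),
      Integrable (fun ω => e t ω i * M (x t) i j * e t ω j) (volume : Measure Ω) := by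
    intro t i j
    have h1 : (fun ω => e t ω i * M (x t) i j * e t ω j)
        = fun ω => M (x t) i j * (e t ω i * e t ω j) := by
      ext ω; ring
    rw [h1]
    exact (hint_prod t i j).const_mul _
  have hYmeas : ∀ t, Measurable (Y t) := by
    intro t
    exact Finset.measurable_sum _ fun i _ => Finset.measurable_sum _ fun j _ =>
      (((hem t i).mul_const _).mul (hem t j))
  have hYint : ∀ t, Integrable (Y t) (volume : Measure Ω) := fun t =>
    integrable_finset_sum _ fun i _ => integrable_finset_sum _ fun j _ => hterm_int t i j
  have hYmean : ∀ t, ∫ ω, Y t ω = ε^2/12 * (M (x t)).trace := by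
    intro t
    rw [hYdef]
    simp only
    rw [integral_finset_sum _ fun i _ => integrable_finset_sum _ fun j _ => hterm_int t i j]
    have h1 : ∀ i : Fin n, ∫ ω, (∑ j, e t ω i * M (x t) i j * e t ω j)
        = ∑ j, M (x t) i j * (if i = j then ε^2/12 else 0) := by
      intro i
      rw [integral_finset_sum _ fun j _ => hterm_int t i j]
      refine Finset.sum_congr rfl fun j _ => ?_
      have h2 : (fun ω => e t ω i * M (x t) i j * e t ω j)
          = fun ω => M (x t) i j * (e t ω i * e t ω j) := by ext ω; ring
      rw [h2, integral_const_mul, hprod]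
    simp_rw [h1]
    simp only [mul_ite, mul_zero, Finset.sum_ite_eq, Finset.mem_univ, if_true]
    rw [Matrix.trace, Finset.mul_sum]
    exact Finset.sum_congr rfl fun i _ => mul_comm _ _
  have hYbdd : ∀ t, ∀ᵐ ω, |Y t ω| ≤ (n:ℝ)^2 * c * (ε/2)^2 := by
    intro t
    have hall : ∀ᵐ ω, ∀ i : Fin n, |e t ω i| ≤ ε/2 := ae_all_iff.2 fun i => hecomp_bdd t i
    filter_upwards [hall] with ω hω
    calc |Y t ω| ≤ ∑ i, |∑ j, e t ω i * M (x t) i j * e t ω j| :=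
        Finset.abs_sum_le_sum_abs _ _
      _ ≤ ∑ i : Fin n, ∑ j : Fin n, |e t ω i * M (x t) i j * e t ω j| :=
        Finset.sum_le_sum fun i _ => Finset.abs_sum_le_sum_abs _ _
      _ ≤ ∑ _i : Fin n, ∑ _j : Fin n, (ε/2) * c * (ε/2) := by
          refine Finset.sum_le_sum fun i _ => Finset.sum_le_sum fun j _ => ?_
          rw [abs_mul, abs_mul]
          exact mul_le_mul (mul_le_mul (hω i) (hMentry (x t) i j) (abs_nonneg _) (le_of_lt ha))
            (hω j) (abs_nonneg _) (by positivity)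
      _ = (n:ℝ)^2 * c * (ε/2)^2 := by
          rw [Finset.sum_const, Finset.sum_const]
          simp only [Finset.card_univ, Fintype.card_fin, nsmul_eq_mul]
          ring
  set K : ℝ := (n:ℝ)^2 * c * (ε/2)^2 + ε^2/12 * ((n:ℝ)*c) + 1 with hKdef
  have hKpos : 0 < K := by positivity
  set Z : ℕ → Ω → ℝ := fun t ω => Y t ω - ε^2/12 * (M (x t)).trace with hZdef
  have hZmeas : ∀ t, Measurable (Z t) := fun t => (hYmeas t).sub_const _
  have hZbdd : ∀ t, ∀ᵐ ω, |Z t ω| ≤ K := by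
    intro t
    filter_upwards [hYbdd t] with ω hω
    have h2 : |ε^2/12 * (M (x t)).trace| ≤ ε^2/12 * ((n:ℝ)*c) := by
      rw [abs_mul, abs_of_nonneg (by positivity : (0:ℝ) ≤ ε^2/12)]
      exact mul_le_mul_of_nonneg_left (htr (x t)) (by positivity)
    calc |Z t ω| = |Y t ω + -(ε^2/12 * (M (x t)).trace)| := by rw [hZdef]; simp [sub_eq_add_neg]
      _ ≤ |Y t ω| + |-(ε^2/12 * (M (x t)).trace)| := abs_add_le _ _
      _ = |Y t ω| + |ε^2/12 * (M (x t)).trace| := by rw [abs_neg]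
      _ ≤ (n:ℝ)^2 * c * (ε/2)^2 + ε^2/12 * ((n:ℝ)*c) := add_le_add hω h2
      _ ≤ K := by rw [hKdef]; linarith
  have hZmean : ∀ t, ∫ ω, Z t ω = 0 := by
    intro t
    rw [hZdef]
    simp only
    rw [integral_sub (hYint t) (integrable_const _), hYmean, integral_const]
    simp
  have hZind : ∀ s t, s ≠ t → IndepFun (Z s) (Z t) (volume : Measure Ω) := by
    intro s t hst
    have hφ : ∀ u : ℕ, Measurable (fun v : Fin n → ℝ =>
        (∑ i, ∑ j, v i * M (x u) i j * v j) - ε^2/12 * (M (x u)).trace) := by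
      intro u
      refine Measurable.sub ?_ measurable_const
      exact Finset.measurable_sum _ fun i _ => Finset.measurable_sum _ fun j _ =>
        ((measurable_pi_apply i).mul_const _).mul (measurable_pi_apply j)
    exact (hindep.indepFun hst).comp (hφ s) (hφ t)
  have hslln := slln_bounded Z K hKpos hZmeas hZbdd hZmean hZind
  have hL2 : Tendsto (fun T : ℕ => ε^2/12 * ((1/(T:ℝ)) * ∑ t ∈ Finset.range T, (M (x t)).trace))
      atTop (nhds (ε^2/12 * L)) := hL.const_mul (ε^2/12)
  filter_upwards [hslln] with ω hω
  have hadd := hω.add hL2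
  rw [zero_add] at hadd
  refine hadd.congr fun T => ?_
  have hsum : ∑ t ∈ Finset.range T, Z t ω
      = (∑ t ∈ Finset.range T, Y t ω) - ε^2/12 * ∑ t ∈ Finset.range T, (M (x t)).trace := by
    rw [hZdef]
    simp only
    rw [Finset.sum_sub_distrib, Finset.mul_sum]
  rw [hsum]
  ring
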